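/- For any α ∈ (0,1), the function (w, δ) ↦ δ·K(w/δ, −1) − δ log α, defined on ℝⁿ × (0, ∞), is jointly convex in (w, δ). -/

import Mathlib

open scoped BigOperators
open Matrix

/-- Cumulant generating function of the portfolio return under the
Gaussian mixture model. -/
noncomputable def cgf {n k : ℕ} (π : Fin k → ℝ) (μ : Fin k → Fin n → ℝ)
    (S : Fin k → Matrix (Fin n) (Fin n) ℝ) (w : Fin n → ℝ) (t : ℝ) : ℝ :=
  Real.log (∑ i, π i * Real.exp (t * (μ i ⬝ᵥ w) + t ^ 2 / 2 * (w ⬝ᵥ (S i).mulVec w)))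

lemma quadform_convex {n : ℕ} {S : Matrix (Fin n) (Fin n) ℝ} (hS : S.PosSemidef) :
    ConvexOn ℝ Set.univ (fun w : Fin n → ℝ => w ⬝ᵥ S.mulVec w) := by
  have hT : Sᵀ = S := by
    have := hS.1
    simpa [Matrix.IsHermitian, Matrix.conjTranspose_eq_transpose_of_trivial] using this
  have hsymm : ∀ x y : Fin n → ℝ, x ⬝ᵥ S.mulVec y = y ⬝ᵥ S.mulVec x := by
    intro x y
    rw [Matrix.dotProduct_mulVec, ← Matrix.mulVec_transpose, hT, dotProduct_comm]
  have hpos : ∀ x : Fin n → ℝ, 0 ≤ x ⬝ᵥ S.mulVec x := by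
    intro x; simpa using hS.dotProduct_mulVec_nonneg x
  refine ⟨convex_univ, ?_⟩
  intro x _ y _ a b ha hb hab
  set qx := x ⬝ᵥ S.mulVec x with hqx
  set qy := y ⬝ᵥ S.mulVec y with hqy
  set qxy := x ⬝ᵥ S.mulVec y with hqxy
  have key : (a • x + b • y) ⬝ᵥ S.mulVec (a • x + b • y)
      = a^2 * qx + 2*a*b*qxy + b^2 * qy := by
    simp only [Matrix.mulVec_add, add_dotProduct, dotProduct_add,
      Matrix.mulVec_smul, smul_dotProduct, dotProduct_smul,
      smul_eq_mul, hsymm y x, ← hqx, ← hqy, ← hqxy]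
    ring
  have hdiff : 0 ≤ (x - y) ⬝ᵥ S.mulVec (x - y) := hpos _
  have hexp : (x - y) ⬝ᵥ S.mulVec (x - y) = qx - 2*qxy + qy := by
    simp only [Matrix.mulVec_sub, sub_dotProduct, dotProduct_sub,
      hsymm y x, ← hqx, ← hqy, ← hqxy]
    ring
  have h2 : 2*qxy ≤ qx + qy := by linarith [hexp ▸ hdiff]
  have hab' : (0:ℝ) ≤ a * b := mul_nonneg ha hb
  simp only [smul_eq_mul, key, ← hqx, ← hqy]
  calc a^2*qx + 2*a*b*qxy + b^2*qy
      ≤ a^2*qx + a*b*(qx+qy) + b^2*qy := by nlinarith [mul_nonneg hab' (sub_nonneg.mpr h2)]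
    _ = a*qx*(a+b) + b*qy*(a+b) := by ring
    _ = a*qx + b*qy := by rw [hab]; ring

lemma lse_convex {n k : ℕ} (hk : 0 < k) (π : Fin k → ℝ) (hπ : ∀ i, 0 < π i)
    (g : Fin k → (Fin n → ℝ) → ℝ) (hg : ∀ i, ConvexOn ℝ Set.univ (g i)) :
    ConvexOn ℝ Set.univ (fun w => Real.log (∑ i, π i * Real.exp (g i w))) := by
  haveI : Nonempty (Fin k) := ⟨⟨0, hk⟩⟩
  refine ⟨convex_univ, ?_⟩
  intro x _ y _ a b ha hb hab
  set P := ∑ i, π i * Real.exp (g i x) with hPdef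
  set Q := ∑ i, π i * Real.exp (g i y) with hQdef
  have hP : 0 < P := Finset.sum_pos (fun i _ => mul_pos (hπ i) (Real.exp_pos _))
    Finset.univ_nonempty
  have hQ : 0 < Q := Finset.sum_pos (fun i _ => mul_pos (hπ i) (Real.exp_pos _))
    Finset.univ_nonempty
  have hPQ : 0 < P ^ a * Q ^ b :=
    mul_pos (Real.rpow_pos_of_pos hP a) (Real.rpow_pos_of_pos hQ b)
  have hterm : ∀ i, π i * Real.exp (g i (a • x + b • y))
      ≤ π i * (P ^ a * Q ^ b * (a * (Real.exp (g i x) / P) + b * (Real.exp (g i y) / Q))) := by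
    intro i
    refine mul_le_mul_of_nonneg_left ?_ (hπ i).le
    have h1 : g i (a • x + b • y) ≤ a * g i x + b * g i y := by
      simpa using (hg i).2 (Set.mem_univ x) (Set.mem_univ y) ha hb hab
    have h2 : Real.exp (g i (a • x + b • y))
        ≤ Real.exp (g i x) ^ a * Real.exp (g i y) ^ b := by
      calc Real.exp (g i (a • x + b • y)) ≤ Real.exp (a * g i x + b * g i y) :=
            Real.exp_le_exp.mpr h1
        _ = Real.exp (g i x) ^ a * Real.exp (g i y) ^ b := by
            rw [Real.exp_add, mul_comm a, mul_comm b, Real.exp_mul, Real.exp_mul]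
    have h3 : (Real.exp (g i x) / P) ^ a * (Real.exp (g i y) / Q) ^ b
        ≤ a * (Real.exp (g i x) / P) + b * (Real.exp (g i y) / Q) :=
      Real.geom_mean_le_arith_mean2_weighted ha hb
        (div_nonneg (Real.exp_pos _).le hP.le) (div_nonneg (Real.exp_pos _).le hQ.le) hab
    have h4 : (Real.exp (g i x) / P) ^ a * (Real.exp (g i y) / Q) ^ b
        = (Real.exp (g i x) ^ a * Real.exp (g i y) ^ b) / (P ^ a * Q ^ b) := by
      rw [Real.div_rpow (Real.exp_pos _).le hP.le, Real.div_rpow (Real.exp_pos _).le hQ.le]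
      ring
    rw [h4] at h3
    calc Real.exp (g i (a • x + b • y)) ≤ Real.exp (g i x) ^ a * Real.exp (g i y) ^ b := h2
      _ = (Real.exp (g i x) ^ a * Real.exp (g i y) ^ b) / (P ^ a * Q ^ b) * (P ^ a * Q ^ b) := by
          field_simp
      _ ≤ (a * (Real.exp (g i x) / P) + b * (Real.exp (g i y) / Q)) * (P ^ a * Q ^ b) :=
          mul_le_mul_of_nonneg_right h3 hPQ.le
      _ = P ^ a * Q ^ b * (a * (Real.exp (g i x) / P) + b * (Real.exp (g i y) / Q)) := by ring
  have hsum1 : ∑ i, π i * Real.exp (g i (a • x + b • y)) ≤ P ^ a * Q ^ b := by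
    calc ∑ i, π i * Real.exp (g i (a • x + b • y))
        ≤ ∑ i, π i * (P ^ a * Q ^ b * (a * (Real.exp (g i x) / P) + b * (Real.exp (g i y) / Q))) :=
          Finset.sum_le_sum fun i _ => hterm i
      _ = P ^ a * Q ^ b * a / P * ∑ i, π i * Real.exp (g i x)
          + P ^ a * Q ^ b * b / Q * ∑ i, π i * Real.exp (g i y) := by
          rw [Finset.mul_sum, Finset.mul_sum, ← Finset.sum_add_distrib]
          refine Finset.sum_congr rfl fun i _ => ?_
          field_simp
      _ = P ^ a * Q ^ b := by
          rw [← hPdef, ← hQdef]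
          field_simp
          linear_combination hab
  have hLpos : 0 < ∑ i, π i * Real.exp (g i (a • x + b • y)) :=
    Finset.sum_pos (fun i _ => mul_pos (hπ i) (Real.exp_pos _)) Finset.univ_nonempty
  have hlog : Real.log (∑ i, π i * Real.exp (g i (a • x + b • y)))
      ≤ Real.log (P ^ a * Q ^ b) := Real.log_le_log hLpos hsum1
  simp only [smul_eq_mul]
  calc Real.log (∑ i, π i * Real.exp (g i (a • x + b • y)))
      ≤ Real.log (P ^ a * Q ^ b) := hlog
    _ = a * Real.log P + b * Real.log Q := by
        rw [Real.log_mul (Real.rpow_pos_of_pos hP a).ne' (Real.rpow_pos_of_pos hQ b).ne',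
          Real.log_rpow hP, Real.log_rpow hQ]

lemma perspective_convex {n : ℕ} {f : (Fin n → ℝ) → ℝ} (hf : ConvexOn ℝ Set.univ f) :
    ConvexOn ℝ ((Set.univ : Set (Fin n → ℝ)) ×ˢ Set.Ioi (0 : ℝ))
      (fun p : (Fin n → ℝ) × ℝ => p.2 * f (p.2⁻¹ • p.1)) := by
  refine ⟨(convex_univ).prod (convex_Ioi 0), ?_⟩
  rintro ⟨x, δ⟩ hp ⟨y, ε⟩ hq a b ha hb hab
  have hδ : 0 < δ := hp.2
  have hε : 0 < ε := hq.2
  set σ := a * δ + b * ε with hσdef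
  have hσ : 0 < σ := by
    rcases ha.lt_or_eq with h | h
    · exact add_pos_of_pos_of_nonneg (mul_pos h hδ) (mul_nonneg hb hε.le)
    · have hb1 : b = 1 := by linarith
      simp only [hσdef, ← h, hb1]
      simpa using hε
  have hw1 : (0:ℝ) ≤ a * δ / σ := div_nonneg (mul_nonneg ha hδ.le) hσ.le
  have hw2 : (0:ℝ) ≤ b * ε / σ := div_nonneg (mul_nonneg hb hε.le) hσ.le
  have hwsum : a * δ / σ + b * ε / σ = 1 := by field_simp; exact hσdef.symm
  have hcomb : σ⁻¹ • (a • x + b • y)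
      = (a * δ / σ) • (δ⁻¹ • x) + (b * ε / σ) • (ε⁻¹ • y) := by
    simp only [smul_smul, smul_add]
    congr 1 <;> congr 1 <;> (field_simp)
  have hkey := hf.2 (Set.mem_univ (δ⁻¹ • x)) (Set.mem_univ (ε⁻¹ • y)) hw1 hw2 hwsum
  rw [← hcomb] at hkey
  have := mul_le_mul_of_nonneg_left hkey hσ.le
  simp only [smul_eq_mul] at this ⊢
  calc (a • (x, δ) + b • (y, ε)).2 * f ((a • (x, δ) + b • (y, ε)).2⁻¹ • (a • (x, δ) + b • (y, ε)).1)
      = σ * f (σ⁻¹ • (a • x + b • y)) := by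
        simp [Prod.smul_def, hσdef, smul_eq_mul]
    _ ≤ σ * (a * δ / σ * f (δ⁻¹ • x) + b * ε / σ * f (ε⁻¹ • y)) := this
    _ = a * (δ * f (δ⁻¹ • x)) + b * (ε * f (ε⁻¹ • y)) := by
        field_simp

/-- The EVaR objective `(w, δ) ↦ δ·K(w/δ, −1) − δ log α` is jointly convex
on `ℝⁿ × (0, ∞)`. -/
theorem evar_objective_convex {n k : ℕ} (hk : 0 < k)
    (π : Fin k → ℝ) (hπ : ∀ i, 0 < π i) (hsum : ∑ i, π i = 1)
    (μ : Fin k → Fin n → ℝ)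
    (S : Fin k → Matrix (Fin n) (Fin n) ℝ) (hS : ∀ i, (S i).PosSemidef)
    (α : ℝ) (hα : α ∈ Set.Ioo (0 : ℝ) 1) :
    ConvexOn ℝ ((Set.univ : Set (Fin n → ℝ)) ×ˢ Set.Ioi (0 : ℝ))
      (fun p : (Fin n → ℝ) × ℝ =>
        p.2 * cgf π μ S (p.2⁻¹ • p.1) (-1) - p.2 * Real.log α) := by
  set gfun : Fin k → (Fin n → ℝ) → ℝ :=
    fun i w => (-1 : ℝ) * (μ i ⬝ᵥ w) + (-1 : ℝ) ^ 2 / 2 * (w ⬝ᵥ (S i).mulVec w) with hgfun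
  have hgconv : ∀ i, ConvexOn ℝ Set.univ (gfun i) := by
    intro i
    have hlin : ConvexOn ℝ Set.univ (fun w : Fin n → ℝ => (-1 : ℝ) * (μ i ⬝ᵥ w)) := by
      refine ⟨convex_univ, ?_⟩
      intro x _ y _ a b ha hb hab
      simp only [smul_eq_mul]
      have : μ i ⬝ᵥ (a • x + b • y) = a * (μ i ⬝ᵥ x) + b * (μ i ⬝ᵥ y) := by
        simp [dotProduct_add, dotProduct_smul]
      rw [this]; ring_nf; exact le_refl _
    have hquad : ConvexOn ℝ Set.univ
        (fun w : Fin n → ℝ => (-1 : ℝ) ^ 2 / 2 * (w ⬝ᵥ (S i).mulVec w)) := by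
      have := (quadform_convex (hS i)).smul (c := (-1 : ℝ) ^ 2 / 2) (by norm_num)
      simpa [smul_eq_mul] using this
    exact hlin.add hquad
  have hlse : ConvexOn ℝ Set.univ
      (fun w => Real.log (∑ i, π i * Real.exp (gfun i w))) := lse_convex hk π hπ gfun hgconv
  have hcgf : ∀ w, cgf π μ S w (-1) = Real.log (∑ i, π i * Real.exp (gfun i w)) := by
    intro w; rfl
  have hgsub : ConvexOn ℝ Set.univ
      (fun w => Real.log (∑ i, π i * Real.exp (gfun i w)) - Real.log α) := by
    convert hlse.add (convexOn_const (-Real.log α) convex_univ) using 1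
    · rfl
    · funext w; simp only [Pi.add_apply]; ring
  have hpers := perspective_convex hgsub
  have heq : (fun p : (Fin n → ℝ) × ℝ =>
        p.2 * ((fun w => Real.log (∑ i, π i * Real.exp (gfun i w)) - Real.log α) (p.2⁻¹ • p.1)))
      = (fun p : (Fin n → ℝ) × ℝ =>
        p.2 * cgf π μ S (p.2⁻¹ • p.1) (-1) - p.2 * Real.log α) := by
    funext p
    simp only [hcgf]
    ring
  rwa [heq] at hpers
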